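/- Let (ξᵢ)_{1≤i≤N} be i.i.d. with law μ and (ξ̂^k)_{1≤k≤p} i.i.d. with law μ independent of the ξᵢ. If g : (ℝ^d)^p → ℝ is integrable (e.g. E sup|δ^p U/δm^p| < ∞ with g(y) = δ^p U/δm^p(μ)(y)), and the index tuple (i₁,...,i_p) ∈ {1,...,N}^p has at least one index i_k different from all others, then E[∫ g(y₁,...,y_p) ⊗_{k=1}^p (δ_{ξ_{i_k}} - δ_{ξ̂^k})(dy_k)] = 0. -/

import Mathlib

open MeasureTheory ProbabilityTheory
open scoped NNReal ENNReal

noncomputable section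

/-- Let `(ξᵢ)_{1≤i≤N}` be i.i.d. with law `μ` and `(ξ̂ᵏ)_{1≤k≤p}`
i.i.d. with law `μ` independent of the `ξᵢ`.  If `g : (ℝ^d)^p → ℝ` is integrable
and the index tuple `(i₁, …, i_p)` has at least one index `i_{k₀}` different from all
the others, then `E[∫ g(y₁,…,y_p) ⊗_{k=1}^p (δ_{ξ_{i_k}} - δ_{ξ̂ᵏ})(dy_k)] = 0`.
(The product signed-measure integral is expanded as a signed sum over the `2^p`
choices of `ξ_{i_k}` or `ξ̂ᵏ` in each coordinate.) -/
theorem stmt7 {d N p : ℕ}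
    {Ω : Type*} [MeasurableSpace Ω] (P : Measure Ω) [IsProbabilityMeasure P]
    (μ : Measure (Fin d → ℝ)) [IsProbabilityMeasure μ]
    (ξ : Fin N → Ω → (Fin d → ℝ)) (ξhat : Fin p → Ω → (Fin d → ℝ))
    (hmeas : ∀ i, Measurable (ξ i)) (hmeas' : ∀ k, Measurable (ξhat k))
    (hindep : iIndepFun (Sum.elim ξ ξhat) P)
    (hlaw : ∀ i, P.map (ξ i) = μ) (hlaw' : ∀ k, P.map (ξhat k) = μ)
    (g : (Fin p → Fin d → ℝ) → ℝ) (hg : Measurable g)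
    (i : Fin p → Fin N) (k₀ : Fin p) (hk₀ : ∀ j, j ≠ k₀ → i j ≠ i k₀)
    (hint : ∀ s : Finset (Fin p),
      Integrable (fun ω => g (fun k => if k ∈ s then ξ (i k) ω else ξhat k ω)) P) :
    ∑ s : Finset (Fin p), (-1 : ℝ) ^ (p - s.card) *
        ∫ ω, g (fun k => if k ∈ s then ξ (i k) ω else ξhat k ω) ∂P = 0 := by
  classical
  have hF : ∀ a : Fin N ⊕ Fin p, Measurable (Sum.elim ξ ξhat a) := by
    rintro (a | a)
    · exact hmeas a
    · exact hmeas' a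
  -- key lemma: toggling k₀ does not change the integral
  have key : ∀ s' : Finset (Fin p), k₀ ∉ s' →
      (∫ ω, g (fun k => if k ∈ insert k₀ s' then ξ (i k) ω else ξhat k ω) ∂P)
      = ∫ ω, g (fun k => if k ∈ s' then ξ (i k) ω else ξhat k ω) ∂P := by
    intro s' hs'
    set T : Finset (Fin N ⊕ Fin p) :=
      Finset.univ.filter (fun a => a ≠ Sum.inl (i k₀) ∧ a ≠ Sum.inr k₀) with hT
    have hmemT1 : ∀ k ∈ s', Sum.inl (i k) ∈ T := by
      intro k hk
      have hkk : k ≠ k₀ := fun h => hs' (h ▸ hk)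
      simp only [hT, Finset.mem_filter, Finset.mem_univ, true_and]
      exact ⟨fun h => hk₀ k hkk (Sum.inl.inj h), fun h => by simp at h⟩
    have hmemT2 : ∀ k : Fin p, k ≠ k₀ → Sum.inr k ∈ T := by
      intro k hk
      simp only [hT, Finset.mem_filter, Finset.mem_univ, true_and]
      exact ⟨fun h => by simp at h, fun h => hk (Sum.inr.inj h)⟩
    set V : Ω → (Fin p → Fin d → ℝ) := fun ω k =>
      if h : k ∈ s' then ξ (i k) ω else if k = k₀ then 0 else ξhat k ω with hV
    set ψ : ((a : T) → (Fin d → ℝ)) → (Fin p → Fin d → ℝ) := fun v k =>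
      if h : k ∈ s' then v ⟨Sum.inl (i k), hmemT1 k h⟩
      else if h2 : k = k₀ then 0 else v ⟨Sum.inr k, hmemT2 k h2⟩ with hψ
    have hψmeas : Measurable ψ := by
      apply measurable_pi_lambda
      intro k
      by_cases h : k ∈ s'
      · simpa [hψ, h] using measurable_pi_apply (⟨Sum.inl (i k), hmemT1 k h⟩ : T)
      · by_cases h2 : k = k₀
        · subst h2
          simp only [hψ, hs', dif_neg, dite_true, dite_false, not_false_iff]
          exact measurable_const
        · simpa [hψ, h, h2] using measurable_pi_apply (⟨Sum.inr k, hmemT2 k h2⟩ : T)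
    have hVψ : ∀ ω, V ω = ψ (fun a : T => Sum.elim ξ ξhat a ω) := by
      intro ω; funext k
      by_cases h : k ∈ s'
      · simp [hV, hψ, h]
      · by_cases h2 : k = k₀ <;> simp [hV, hψ, h, h2]
    have hVmeas : Measurable V := by
      have h0 : Measurable (fun ω (a : T) => Sum.elim ξ ξhat a ω) :=
        measurable_pi_lambda _ (fun a => hF a)
      have heq : V = fun ω => ψ (fun a : T => Sum.elim ξ ξhat a ω) := funext hVψ
      rw [heq]; exact hψmeas.comp h0
    set c : ((Fin d → ℝ) × (Fin p → Fin d → ℝ)) → ℝ :=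
      fun z => g (Function.update z.2 k₀ z.1) with hc
    have hcmeas : Measurable c := by
      apply hg.comp
      apply measurable_pi_lambda
      intro k
      by_cases h : k = k₀
      · subst h
        simp only [Function.update_self]
        exact measurable_fst
      · simp only [Function.update_of_ne h]
        exact (measurable_pi_apply k).comp measurable_snd
    have indep_of : ∀ a : Fin N ⊕ Fin p, a ∉ T →
        IndepFun (Sum.elim ξ ξhat a) V P := by
      intro a ha
      have hdisj : Disjoint ({a} : Finset (Fin N ⊕ Fin p)) T := by
        simp [Finset.disjoint_left, ha]
      have h1 := hindep.indepFun_finset {a} T hdisj hF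
      have h2 : IndepFun
          ((fun v : (b : ({a} : Finset (Fin N ⊕ Fin p))) → (Fin d → ℝ) =>
              v ⟨a, Finset.mem_singleton_self a⟩) ∘
            (fun ω (b : ({a} : Finset (Fin N ⊕ Fin p))) => Sum.elim ξ ξhat b ω))
          (ψ ∘ (fun ω (b : T) => Sum.elim ξ ξhat b ω)) P :=
        h1.comp (measurable_pi_apply _) hψmeas
      have heq2 : (ψ ∘ (fun ω (b : T) => Sum.elim ξ ξhat b ω)) = V := by
        funext ω; exact (hVψ ω).symm
      rwa [heq2] at h2
    have main : ∀ η : Ω → (Fin d → ℝ), Measurable η → P.map η = μ →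
        IndepFun η V P →
        (∫ ω, c (η ω, V ω) ∂P) = ∫ z, c z ∂(μ.prod (P.map V)) := by
      intro η hη hηlaw hηindep
      have hpairlaw : P.map (fun ω => (η ω, V ω)) = (P.map η).prod (P.map V) :=
        (indepFun_iff_map_prod_eq_prod_map_map hη.aemeasurable hVmeas.aemeasurable).1 hηindep
      calc (∫ ω, c (η ω, V ω) ∂P)
          = ∫ z, c z ∂(P.map (fun ω => (η ω, V ω))) :=
            (integral_map (hη.prodMk hVmeas).aemeasurable hcmeas.aestronglyMeasurable).symm
        _ = ∫ z, c z ∂((P.map η).prod (P.map V)) := by rw [hpairlaw]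
        _ = ∫ z, c z ∂(μ.prod (P.map V)) := by rw [hηlaw]
    have e1 : ∀ ω, (fun k => if k ∈ insert k₀ s' then ξ (i k) ω else ξhat k ω)
        = Function.update (V ω) k₀ (ξ (i k₀) ω) := by
      intro ω; funext k
      by_cases h : k = k₀
      · subst h; simp [Function.update, hV]
      · by_cases h2 : k ∈ s' <;>
          simp [Function.update, h, h2, hV, Finset.mem_insert]
    have e2 : ∀ ω, (fun k => if k ∈ s' then ξ (i k) ω else ξhat k ω)
        = Function.update (V ω) k₀ (ξhat k₀ ω) := by
      intro ω; funext k
      by_cases h : k = k₀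
      · subst h; simp [Function.update, hV, hs']
      · by_cases h2 : k ∈ s' <;> simp [Function.update, h, h2, hV]
    have ha1 : (Sum.inl (i k₀) : Fin N ⊕ Fin p) ∉ T := by simp [hT]
    have ha2 : (Sum.inr k₀ : Fin N ⊕ Fin p) ∉ T := by simp [hT]
    have m1 := main (ξ (i k₀)) (hmeas _) (hlaw _) (indep_of _ ha1)
    have m2 := main (ξhat k₀) (hmeas' _) (hlaw' _) (indep_of _ ha2)
    calc (∫ ω, g (fun k => if k ∈ insert k₀ s' then ξ (i k) ω else ξhat k ω) ∂P)
        = ∫ ω, c (ξ (i k₀) ω, V ω) ∂P := by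
          congr 1; funext ω; rw [hc]; simp only; rw [e1 ω]
      _ = ∫ z, c z ∂(μ.prod (P.map V)) := m1
      _ = ∫ ω, c (ξhat k₀ ω, V ω) ∂P := m2.symm
      _ = ∫ ω, g (fun k => if k ∈ s' then ξ (i k) ω else ξhat k ω) ∂P := by
          congr 1; funext ω; rw [hc]; simp only; rw [e2 ω]
  -- the signed sum vanishes by the involution s ↦ s Δ {k₀}
  set f : Finset (Fin p) → ℝ := fun s => (-1 : ℝ) ^ (p - s.card) *
      ∫ ω, g (fun k => if k ∈ s then ξ (i k) ω else ξhat k ω) ∂P with hf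
  have hpair : ∀ s' : Finset (Fin p), k₀ ∉ s' → f (insert k₀ s') + f s' = 0 := by
    intro s' hs'
    have hcard : (insert k₀ s').card = s'.card + 1 := Finset.card_insert_of_notMem hs'
    have hlt : s'.card < p := by
      have h1 : s' ⊆ Finset.univ.erase k₀ := fun x hx =>
        Finset.mem_erase.2 ⟨fun h => hs' (h ▸ hx), Finset.mem_univ x⟩
      have h2 := Finset.card_le_card h1
      have h3 : (Finset.univ.erase k₀).card = p - 1 := by
        rw [Finset.card_erase_of_mem (Finset.mem_univ k₀)]
        simp
      have hp : 0 < p := Fin.pos k₀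
      omega
    have hsign : (p - s'.card) = (p - (insert k₀ s').card) + 1 := by omega
    rw [hf]
    simp only
    rw [key s' hs', hsign, pow_succ]
    ring
  have h₁ : ∀ s : Finset (Fin p),
      f s + f (if k₀ ∈ s then s.erase k₀ else insert k₀ s) = 0 := by
    intro s
    by_cases h : k₀ ∈ s
    · simp only [h, if_true]
      have h2 := hpair (s.erase k₀) (Finset.notMem_erase k₀ s)
      rw [Finset.insert_erase h] at h2
      exact h2
    · simp only [h, if_false]
      linarith [hpair s h]
  have h₂ : ∀ s : Finset (Fin p), f s ≠ 0 →
      (if k₀ ∈ s then s.erase k₀ else insert k₀ s) ≠ s := by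
    intro s _
    by_cases h : k₀ ∈ s
    · simp only [h, if_true]
      intro heq
      exact (Finset.notMem_erase k₀ s) (heq.symm ▸ h)
    · simp only [h, if_false]
      intro heq
      exact h (heq ▸ Finset.mem_insert_self k₀ s)
  have h₃ : ∀ s : Finset (Fin p),
      (if k₀ ∈ (if k₀ ∈ s then s.erase k₀ else insert k₀ s)
        then (if k₀ ∈ s then s.erase k₀ else insert k₀ s).erase k₀
        else insert k₀ (if k₀ ∈ s then s.erase k₀ else insert k₀ s)) = s := by
    intro s
    by_cases h : k₀ ∈ s
    · simp [h, Finset.notMem_erase, Finset.insert_erase h]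
    · simp [h, Finset.erase_insert h]
  exact Finset.sum_ninvolution (fun s => if k₀ ∈ s then s.erase k₀ else insert k₀ s)
    h₁ h₂ (fun s => Finset.mem_univ _) h₃
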